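/- If a finite common-interest game (G, W) is (λ, μ)-k-coalitionally smooth, then every k-strong Nash equilibrium a* satisfies W(a*) ≥ (λ_ζ / (1 + μ_ζ)) · W(a°) for every ζ ∈ {1,...,k}, where a° is any welfare-maximizing joint action; hence the k-strong price of anarchy is at least max_{ζ ∈ [k]} λ_ζ/(1+μ_ζ). -/

import Mathlib

open Finset

/-- In the joint action `a`, replace the actions of the agents in `Γ` by those from `a'`. -/
def deviate {n : ℕ} {A : Fin n → Type*} (a a' : ∀ i, A i) (Γ : Finset (Fin n)) :
    ∀ i, A i := fun i => if i ∈ Γ then a' i else a i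

/-- `a` is a k-strong Nash equilibrium of the common-interest game with welfare `W`:
no group of between 1 and k agents can deviate to strictly improve `W`. -/
def kSNE {n : ℕ} {A : Fin n → Type*} (W : (∀ i, A i) → ℝ) (k : ℕ) (a : ∀ i, A i) : Prop :=
  ∀ Γ : Finset (Fin n), 1 ≤ Γ.card → Γ.card ≤ k → ∀ a' : ∀ i, A i,
    W (deviate a a' Γ) ≤ W a

/-- The game is (λ,μ)-k-coalitionally smooth: for all joint actions a, a' and all
ζ ∈ {1,…,k}, the average welfare of size-ζ coalition deviations from a toward a' is
at least λ_ζ W(a') − μ_ζ W(a). -/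
def CoalSmooth {n : ℕ} {A : Fin n → Type*} (W : (∀ i, A i) → ℝ) (k : ℕ)
    (lam mu : ℕ → ℝ) : Prop :=
  ∀ a a' : ∀ i, A i, ∀ ζ, 1 ≤ ζ → ζ ≤ k →
    lam ζ * W a' - mu ζ * W a ≤
      (1 / (n.choose ζ : ℝ)) *
        ∑ Γ ∈ Finset.powersetCard ζ (Finset.univ : Finset (Fin n)), W (deviate a a' Γ)

/-- In a (λ,μ)-k-coalitionally smooth common-interest game every
k-strong Nash equilibrium a* satisfies W(a*) ≥ (λ_ζ/(1+μ_ζ))·W(a°) for every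
ζ ∈ {1,…,k}, where a° maximizes W. -/
theorem stmt_3 {n k : ℕ} {A : Fin n → Type*} (W : (∀ i, A i) → ℝ)
    (hW : ∀ a, 0 ≤ W a) (lam mu : ℕ → ℝ)
    (hlam : ∀ ζ, 0 ≤ lam ζ) (hmu : ∀ ζ, 0 ≤ mu ζ)
    (hsmooth : CoalSmooth W k lam mu)
    (astar : ∀ i, A i) (hstar : kSNE W k astar)
    (aopt : ∀ i, A i) (hopt : ∀ a, W a ≤ W aopt) :
    ∀ ζ, 1 ≤ ζ → ζ ≤ k → (lam ζ / (1 + mu ζ)) * W aopt ≤ W astar := by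
  intro ζ h1 h2
  have hsm := hsmooth astar aopt ζ h1 h2
  have hR : (1 / (n.choose ζ : ℝ)) *
      ∑ Γ ∈ Finset.powersetCard ζ (Finset.univ : Finset (Fin n)), W (deviate astar aopt Γ)
      ≤ W astar := by
    by_cases hzn : ζ ≤ n
    · have hc : 0 < (n.choose ζ : ℝ) := by
        exact_mod_cast Nat.choose_pos hzn
      have hsum : ∑ Γ ∈ Finset.powersetCard ζ (Finset.univ : Finset (Fin n)),
          W (deviate astar aopt Γ) ≤ (n.choose ζ : ℝ) * W astar := by
        have hcard : (Finset.powersetCard ζ (Finset.univ : Finset (Fin n))).card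
            = n.choose ζ := by
          simp [Finset.card_powersetCard]
        calc ∑ Γ ∈ Finset.powersetCard ζ (Finset.univ : Finset (Fin n)),
              W (deviate astar aopt Γ)
            ≤ ∑ _Γ ∈ Finset.powersetCard ζ (Finset.univ : Finset (Fin n)), W astar := by
              apply Finset.sum_le_sum
              intro Γ hΓ
              have hΓc : Γ.card = ζ := (Finset.mem_powersetCard.1 hΓ).2
              exact hstar Γ (hΓc ▸ h1) (hΓc ▸ h2) aopt
          _ = (n.choose ζ : ℝ) * W astar := by
              rw [Finset.sum_const, hcard, nsmul_eq_mul]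
      rw [one_div, inv_mul_le_iff₀ hc]
      linarith [hsum]
    · have : (n.choose ζ : ℝ) = 0 := by
        exact_mod_cast Nat.choose_eq_zero_of_lt (Nat.lt_of_not_le hzn)
      rw [this]
      simpa using hW astar
  have key : lam ζ * W aopt ≤ (1 + mu ζ) * W astar := by nlinarith
  have hpos : (0:ℝ) < 1 + mu ζ := by linarith [hmu ζ]
  rw [div_mul_eq_mul_div, div_le_iff₀ hpos]
  linarith [key]
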